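/- arXiv:1611.06655 — 7 statements merged into one kernel-verified Lean document; each statement's English description precedes it below -/
import Mathlib

section
/- Let 0 < a ≤ b, let p be a positive integer, and let z_1, …, z_p, z_1', …, z_p' be 2p mutually independent random variables with z_j ~ N(0, σ_j^2) and z_j' ~ N(0, σ_j^2), where a ≤ σ_j^2 ≤ b for every j. Then there exists a constant C > 0, depending only on a and b, such that for every α with 0 < α < 1/(2b^2), P( | (1/p) ∑_{j=1}^p z_j z_j' | > α ) ≤ 4 · exp( − C p α^2 ). -/
open MeasureTheory ProbabilityTheory Real
open scoped NNReal ENNReal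


open MeasureTheory ProbabilityTheory Real
open scoped NNReal ENNReal

-- bridge: integral against gaussianReal
lemma gauss_int_eq {v : ℝ≥0} (hv : v ≠ 0) (g : ℝ → ℝ) :
    ∫ x, g x ∂(gaussianReal 0 v) = ∫ x, gaussianPDFReal 0 v x * g x := by
  rw [gaussianReal_of_var_ne_zero _ hv]
  have hmeas : Measurable fun x => (gaussianPDFReal 0 v x).toNNReal :=
    (measurable_gaussianPDFReal 0 v).real_toNNReal
  have : (gaussianPDF 0 v) = fun x => ((fun y => (gaussianPDFReal 0 v y).toNNReal) x : ℝ≥0∞) := by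
    funext x; rfl
  rw [this, integral_withDensity_eq_integral_smul hmeas]
  congr 1
  funext x
  rw [NNReal.smul_def, Real.coe_toNNReal _ (gaussianPDFReal_nonneg 0 v x), smul_eq_mul]

lemma gauss_integrable_iff {v : ℝ≥0} (hv : v ≠ 0) {g : ℝ → ℝ} :
    Integrable g (gaussianReal 0 v) ↔ Integrable (fun x => gaussianPDFReal 0 v x * g x) := by
  rw [gaussianReal_of_var_ne_zero _ hv]
  have hmeas : Measurable fun x => (gaussianPDFReal 0 v x).toNNReal :=
    (measurable_gaussianPDFReal 0 v).real_toNNReal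
  have : (gaussianPDF 0 v) = fun x => ((fun y => (gaussianPDFReal 0 v y).toNNReal) x : ℝ≥0∞) := by
    funext x; rfl
  rw [this, integrable_withDensity_iff_integrable_smul hmeas]
  apply integrable_congr
  filter_upwards with x
  rw [NNReal.smul_def, Real.coe_toNNReal _ (gaussianPDFReal_nonneg 0 v x), smul_eq_mul]

lemma gauss_exp_sq (v : ℝ≥0) (hv : v ≠ 0) {c : ℝ} (hc : 2 * c * v < 1) :
    Integrable (fun x => exp (c * x ^ 2)) (gaussianReal 0 v) ∧
    ∫ x, exp (c * x ^ 2) ∂(gaussianReal 0 v) = (Real.sqrt (1 - 2 * c * v))⁻¹ := by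
  have hV : (0:ℝ) < v := lt_of_le_of_ne v.coe_nonneg (by exact_mod_cast (Ne.symm hv))
  set V : ℝ := (v:ℝ) with hVdef
  set β : ℝ := 1/(2*V) - c with hβdef
  have hβ : 0 < β := by
    rw [hβdef, sub_pos, lt_div_iff₀ (by linarith)]
    linarith
  have hpoint : ∀ x : ℝ, gaussianPDFReal 0 v x * exp (c * x ^ 2)
      = (Real.sqrt (2 * π * V))⁻¹ * exp (-β * x ^ 2) := by
    intro x
    rw [gaussianPDFReal_def, mul_assoc, ← Real.exp_add]
    congr 1
    rw [hβdef, hVdef]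
    congr 1
    field_simp
    ring
  have hint : Integrable (fun x => (Real.sqrt (2 * π * V))⁻¹ * exp (-β * x ^ 2)) := by
    exact (integrable_exp_neg_mul_sq hβ).const_mul _
  constructor
  · rw [gauss_integrable_iff hv]
    exact hint.congr (by filter_upwards with x using (hpoint x).symm)
  · rw [gauss_int_eq hv]
    calc ∫ x, gaussianPDFReal 0 v x * exp (c * x ^ 2)
        = ∫ x, (Real.sqrt (2 * π * V))⁻¹ * exp (-β * x ^ 2) := by
          congr 1; funext x; exact hpoint x
      _ = (Real.sqrt (2 * π * V))⁻¹ * Real.sqrt (π / β) := by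
          rw [MeasureTheory.integral_const_mul, integral_gaussian]
      _ = (Real.sqrt (1 - 2 * c * V))⁻¹ := by
          have h1 : 1 - 2 * c * V = (2 * V) * β := by rw [hβdef]; field_simp
          have h2 : 2 * π * V = (2 * V) * π := by ring
          have h3 : Real.sqrt (π / β) = Real.sqrt π / Real.sqrt β :=
            Real.sqrt_div pi_pos.le β
          rw [h1, h2, Real.sqrt_mul (by linarith) π, Real.sqrt_mul (by linarith) β, h3]
          have p1 : Real.sqrt (2 * V) ≠ 0 := by positivity
          have p2 : Real.sqrt π ≠ 0 := by positivity
          have p3 : Real.sqrt β ≠ 0 := by positivity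
          field_simp

lemma gauss_exp_lin (v : ℝ≥0) (hv : v ≠ 0) (s : ℝ) :
    Integrable (fun x => exp (s * x)) (gaussianReal 0 v) ∧
    ∫ x, exp (s * x) ∂(gaussianReal 0 v) = exp ((v : ℝ) * s ^ 2 / 2) := by
  have hV : (0:ℝ) < v := lt_of_le_of_ne v.coe_nonneg (by exact_mod_cast (Ne.symm hv))
  set V : ℝ := (v:ℝ) with hVdef
  have hpoint : ∀ x : ℝ, gaussianPDFReal 0 v x * exp (s * x)
      = exp (V * s ^ 2 / 2) * gaussianPDFReal (s * V) v x := by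
    intro x
    rw [gaussianPDFReal_def, gaussianPDFReal_def]
    rw [mul_assoc, ← Real.exp_add, mul_comm (exp _), mul_assoc, mul_assoc, ← Real.exp_add,
      ← mul_assoc]
    congr 1
    rw [hVdef]
    congr 1
    field_simp
    ring
  constructor
  · rw [gauss_integrable_iff hv]
    exact ((integrable_gaussianPDFReal (s*V) v).const_mul _).congr
      (by filter_upwards with x using (hpoint x).symm)
  · rw [gauss_int_eq hv]
    calc ∫ x, gaussianPDFReal 0 v x * exp (s * x)
        = ∫ x, exp (V * s ^ 2 / 2) * gaussianPDFReal (s * V) v x := by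
          congr 1; funext x; exact hpoint x
      _ = exp (V * s ^ 2 / 2) := by
          rw [MeasureTheory.integral_const_mul, integral_gaussianPDFReal_eq_one _ hv, mul_one]

lemma gauss_prod_mgf (v : ℝ≥0) (hv : v ≠ 0) (t : ℝ) (h : t ^ 2 * (v:ℝ) ^ 2 < 1) :
    Integrable (fun q : ℝ × ℝ => exp (t * (q.1 * q.2)))
      ((gaussianReal 0 v).prod (gaussianReal 0 v)) ∧
    ∫ q, exp (t * (q.1 * q.2)) ∂((gaussianReal 0 v).prod (gaussianReal 0 v))
      = (Real.sqrt (1 - t ^ 2 * (v:ℝ) ^ 2))⁻¹ := by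
  have hV : (0:ℝ) < v := lt_of_le_of_ne v.coe_nonneg (by exact_mod_cast (Ne.symm hv))
  set V : ℝ := (v:ℝ) with hVdef
  set c : ℝ := t ^ 2 * V / 2 with hcdef
  have hc : 2 * c * V < 1 := by rw [hcdef]; nlinarith
  have hmeas : AEStronglyMeasurable (fun q : ℝ × ℝ => exp (t * (q.1 * q.2)))
      ((gaussianReal 0 v).prod (gaussianReal 0 v)) := by
    apply Continuous.aestronglyMeasurable; fun_prop
  have hinner : ∀ x : ℝ, ∫ y, exp (t * (x * y)) ∂(gaussianReal 0 v) = exp (c * x ^ 2) := by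
    intro x
    have := (gauss_exp_lin v hv (t * x)).2
    simp_rw [mul_assoc] at this ⊢
    rw [this]
    congr 1
    rw [hcdef]; ring
  have hinner_int : ∀ x : ℝ, Integrable (fun y => exp (t * (x * y))) (gaussianReal 0 v) := by
    intro x
    have := (gauss_exp_lin v hv (t * x)).1
    simpa [mul_assoc] using this
  have houter_int : Integrable (fun x => exp (c * x ^ 2)) (gaussianReal 0 v) :=
    (gauss_exp_sq v hv hc).1
  have hint : Integrable (fun q : ℝ × ℝ => exp (t * (q.1 * q.2)))
      ((gaussianReal 0 v).prod (gaussianReal 0 v)) := by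
    rw [integrable_prod_iff hmeas]
    constructor
    · filter_upwards with x using hinner_int x
    · apply houter_int.congr
      filter_upwards with x
      rw [← hinner x]
      simp_rw [Real.norm_eq_abs, abs_of_pos (Real.exp_pos _)]
  refine ⟨hint, ?_⟩
  rw [MeasureTheory.integral_prod _ hint]
  simp_rw [hinner]
  rw [(gauss_exp_sq v hv hc).2]
  congr 2
  rw [hcdef]; ring
variable {Ω : Type} [MeasureSpace Ω]

lemma indep_sum_single {p : ℕ} (z z' : Fin p → Ω → ℝ)
    (hz : ∀ j, Measurable (z j)) (hz' : ∀ j, Measurable (z' j))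
    (h_indep : iIndepFun (Sum.elim z z') ℙ)
    (s : Finset (Fin p)) (i : Fin p) (hi : i ∉ s) :
    IndepFun (fun ω => ∑ j ∈ s, z j ω * z' j ω) (fun ω => z i ω * z' i ω) ℙ := by
  classical
  have hmeas : ∀ k : Fin p ⊕ Fin p, Measurable (Sum.elim z z' k) := by
    rintro (j | j)
    · exact hz j
    · exact hz' j
  set S : Finset (Fin p ⊕ Fin p) := s.image Sum.inl ∪ s.image Sum.inr with hS
  set T : Finset (Fin p ⊕ Fin p) := {Sum.inl i, Sum.inr i} with hT
  have hST : Disjoint S T := by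
    rw [Finset.disjoint_left]
    rintro k hk hkT
    simp only [hT, Finset.mem_insert, Finset.mem_singleton] at hkT
    simp only [hS, Finset.mem_union, Finset.mem_image] at hk
    rcases hkT with rfl | rfl <;> rcases hk with ⟨j, hj, hjk⟩ | ⟨j, hj, hjk⟩ <;>
      simp_all <;> exact hi (hjk ▸ hj)
  have h := h_indep.indepFun_finset S T hST hmeas
  have hmem1 : ∀ j : Fin p, j ∈ s → Sum.inl j ∈ S := fun j hj =>
    Finset.mem_union_left _ (Finset.mem_image_of_mem _ hj)
  have hmem2 : ∀ j : Fin p, j ∈ s → Sum.inr j ∈ S := fun j hj =>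
    Finset.mem_union_right _ (Finset.mem_image_of_mem _ hj)
  set φ : ((x : S) → ℝ) → ℝ :=
    fun v => ∑ j ∈ s.attach, v ⟨Sum.inl j.1, hmem1 j.1 j.2⟩ * v ⟨Sum.inr j.1, hmem2 j.1 j.2⟩
    with hφ
  set ψ : ((x : T) → ℝ) → ℝ :=
    fun v => v ⟨Sum.inl i, by simp [hT]⟩ * v ⟨Sum.inr i, by simp [hT]⟩ with hψ
  have hφm : Measurable φ := by
    apply Finset.measurable_sum
    intro j _
    exact ((measurable_pi_apply _).mul (measurable_pi_apply _))
  have hψm : Measurable ψ := (measurable_pi_apply _).mul (measurable_pi_apply _)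
  have := h.comp hφm hψm
  convert this using 1
  · funext ω
    simp only [Function.comp_apply, hφ]
    rw [← Finset.sum_attach s (fun j => z j ω * z' j ω)]
    simp only [Sum.elim_inl, Sum.elim_inr]
  · rfl

lemma sum_mgf_int [IsProbabilityMeasure (ℙ : Measure Ω)] {p : ℕ} (z z' : Fin p → Ω → ℝ)
    (hz : ∀ j, Measurable (z j)) (hz' : ∀ j, Measurable (z' j))
    (h_indep : iIndepFun (Sum.elim z z') ℙ) (t : ℝ)
    (hint : ∀ j, Integrable (fun ω => exp (t * (z j ω * z' j ω))) ℙ)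
    (s : Finset (Fin p)) :
    Integrable (fun ω => exp (t * ∑ j ∈ s, z j ω * z' j ω)) ℙ ∧
      mgf (fun ω => ∑ j ∈ s, z j ω * z' j ω) ℙ t
        = ∏ j ∈ s, mgf (fun ω => z j ω * z' j ω) ℙ t := by
  classical
  induction s using Finset.induction_on with
  | empty =>
    constructor
    · simpa using (integrable_const (1 : ℝ))
    · simp [mgf]
  | insert i s hi ih =>
    have hsplit : (fun ω => ∑ j ∈ insert i s, z j ω * z' j ω)
        = (fun ω => z i ω * z' i ω) + (fun ω => ∑ j ∈ s, z j ω * z' j ω) := by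
      funext ω; simp [Finset.sum_insert hi]
    have hindep2 : IndepFun (fun ω => z i ω * z' i ω)
        (fun ω => ∑ j ∈ s, z j ω * z' j ω) ℙ :=
      (indep_sum_single z z' hz hz' h_indep s i hi).symm
    constructor
    · have := hindep2.integrable_exp_mul_add (t := t) (hint i) ih.1
      simpa [Finset.sum_insert hi] using this
    · rw [hsplit, hindep2.mgf_add ((hint i).1)
        (((Finset.measurable_sum s (fun j _ => (hz j).mul (hz' j))).const_mul t).exp.aestronglyMeasurable),
        ih.2, Finset.prod_insert hi]

lemma inv_sqrt_le_exp {x : ℝ} (h0 : 0 ≤ x) (h1 : x ≤ 1/2) :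
    (Real.sqrt (1 - x))⁻¹ ≤ exp x := by
  have hx : 0 < 1 - x := by linarith
  have h2 : (1 - x)⁻¹ ≤ 1 + 2 * x := by
    rw [inv_eq_one_div, div_le_iff₀ hx]
    nlinarith
  have h3 : (1:ℝ) + 2 * x ≤ exp (2 * x) := by
    have := Real.add_one_le_exp (2 * x); linarith
  calc (Real.sqrt (1 - x))⁻¹ = Real.sqrt ((1 - x)⁻¹) := (Real.sqrt_inv _).symm
    _ ≤ Real.sqrt (exp (2 * x)) := Real.sqrt_le_sqrt (h2.trans h3)
    _ = exp x := by
        rw [show (2:ℝ) * x = x + x by ring, Real.exp_add, Real.sqrt_mul_self (exp_pos x).le]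

lemma pair_mgf [IsProbabilityMeasure (ℙ : Measure Ω)] {X Y : Ω → ℝ}
    (hX : Measurable X) (hY : Measurable Y) (hind : IndepFun X Y ℙ)
    {v : ℝ≥0} (hv : v ≠ 0) (hlX : Measure.map X ℙ = gaussianReal 0 v)
    (hlY : Measure.map Y ℙ = gaussianReal 0 v) {t : ℝ} (h : t ^ 2 * (v:ℝ) ^ 2 < 1) :
    Integrable (fun ω => exp (t * (X ω * Y ω))) ℙ ∧
      mgf (fun ω => X ω * Y ω) ℙ t = (Real.sqrt (1 - t ^ 2 * (v:ℝ) ^ 2))⁻¹ := by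
  have hmap : Measure.map (fun ω => (X ω, Y ω)) (ℙ : Measure Ω) = (gaussianReal 0 v).prod (gaussianReal 0 v) := by
    rw [(indepFun_iff_map_prod_eq_prod_map_map hX.aemeasurable hY.aemeasurable).mp hind,
      hlX, hlY]
  have hpm : Measurable (fun ω => (X ω, Y ω)) := hX.prodMk hY
  have hgm : Measurable (fun q : ℝ × ℝ => exp (t * (q.1 * q.2))) := by fun_prop
  obtain ⟨hint, hval⟩ := gauss_prod_mgf v hv t h
  rw [← hmap] at hint hval
  constructor
  · exact (integrable_map_measure hgm.aestronglyMeasurable hpm.aemeasurable).mp hint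
  · rw [← hval, integral_map hpm.aemeasurable hgm.aestronglyMeasurable]
    rfl

set_option maxHeartbeats 1000000 in
/-- Deviation bound for the average of products of independent pairs of
centered Gaussians with variances in `[a, b]`. -/
theorem stmt_3 (a b : ℝ) (ha : 0 < a) (hab : a ≤ b) :
    ∃ C > (0 : ℝ),
      ∀ (Ω : Type) [MeasureSpace Ω] [IsProbabilityMeasure (ℙ : Measure Ω)]
        (p : ℕ), 0 < p →
        ∀ (σsq : Fin p → ℝ≥0), (∀ j, a ≤ (σsq j : ℝ) ∧ (σsq j : ℝ) ≤ b) →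
        ∀ (z z' : Fin p → Ω → ℝ),
        (∀ j, Measurable (z j)) → (∀ j, Measurable (z' j)) →
        iIndepFun (Sum.elim z z') ℙ →
        (∀ j, Measure.map (z j) ℙ = gaussianReal 0 (σsq j)) →
        (∀ j, Measure.map (z' j) ℙ = gaussianReal 0 (σsq j)) →
        ∀ α : ℝ, 0 < α → α < 1 / (2 * b ^ 2) →
          ℙ {ω | α < |(1 / (p : ℝ)) * ∑ j, z j ω * z' j ω|}
            ≤ ENNReal.ofReal (4 * Real.exp (-(C * p * α ^ 2))) := by
  have hb : 0 < b := lt_of_lt_of_le ha hab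
  refine ⟨min (1/(4*b^2)) (b/2), lt_min (by positivity) (by positivity), ?_⟩
  set C := min (1/(4*b^2)) (b/2) with hCdef
  have hC0 : 0 < C := lt_min (by positivity) (by positivity)
  intro Ω _ _ p hp σsq hσ z z' hz hz' hind hlz hlz' α hα hαb
  set t := min (α/(2*b^2)) (1/(2*b)) with htdef
  have ht : 0 < t := lt_min (by positivity) (by positivity)
  have htb : t * b ≤ 1/2 := by
    calc t * b ≤ (1/(2*b)) * b := by
          exact mul_le_mul_of_nonneg_right (min_le_right _ _) hb.le
      _ = 1/2 := by field_simp
  have hαp : 2 * b^2 * α < 1 := by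
    rw [lt_div_iff₀ (by positivity)] at hαb; linarith
  -- per-index facts
  have hvpos : ∀ j, (0:ℝ) < (σsq j : ℝ) := fun j => lt_of_lt_of_le ha (hσ j).1
  have hvne : ∀ j, σsq j ≠ 0 := by
    intro j hj
    have := hvpos j; rw [hj] at this; simp at this
  have hj : ∀ (s : ℝ), s^2 = t^2 → ∀ j : Fin p,
      Integrable (fun ω => Real.exp (s * (z j ω * z' j ω))) ℙ ∧
      mgf (fun ω => z j ω * z' j ω) ℙ s ≤ Real.exp (t^2 * b^2) := by
    intro s hs j
    have hVb : (σsq j : ℝ) ≤ b := (hσ j).2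
    have htv2 : t^2 * (σsq j:ℝ)^2 ≤ 1/4 := by
      have h1 : t * (σsq j:ℝ) ≤ t * b := mul_le_mul_of_nonneg_left hVb ht.le
      have h2 : (0:ℝ) ≤ t * (σsq j:ℝ) := by positivity
      nlinarith [h1.trans htb, h2]
    have hlt : s ^ 2 * (σsq j:ℝ)^2 < 1 := by rw [hs]; nlinarith
    have hindj : IndepFun (z j) (z' j) ℙ :=
      hind.indepFun (show (Sum.inl j : Fin p ⊕ Fin p) ≠ Sum.inr j by simp)
    obtain ⟨hint, hval⟩ := pair_mgf (hz j) (hz' j) hindj (hvne j) (hlz j) (hlz' j) hlt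
    refine ⟨hint, ?_⟩
    rw [hval]
    calc (Real.sqrt (1 - s^2 * (σsq j:ℝ)^2))⁻¹ ≤ Real.exp (s^2 * (σsq j:ℝ)^2) :=
          inv_sqrt_le_exp (by positivity) (by rw [hs]; linarith)
      _ ≤ Real.exp (t^2 * b^2) := by
          apply Real.exp_le_exp.mpr; rw [hs]
          have hV2 : (σsq j:ℝ)^2 ≤ b^2 := by nlinarith [(hvpos j).le]
          exact mul_le_mul_of_nonneg_left hV2 (sq_nonneg t)
  -- sum facts
  have hsum : ∀ (s : ℝ), s^2 = t^2 →
      Integrable (fun ω => Real.exp (s * ∑ j, z j ω * z' j ω)) ℙ ∧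
      mgf (fun ω => ∑ j, z j ω * z' j ω) ℙ s ≤ Real.exp (p * (t^2 * b^2)) := by
    intro s hs
    obtain ⟨hint, hval⟩ := sum_mgf_int z z' hz hz' hind s (fun j => (hj s hs j).1) Finset.univ
    refine ⟨hint, ?_⟩
    rw [hval]
    calc ∏ j, mgf (fun ω => z j ω * z' j ω) ℙ s
        ≤ ∏ _j : Fin p, Real.exp (t^2 * b^2) :=
          Finset.prod_le_prod (fun j _ => mgf_nonneg) (fun j _ => (hj s hs j).2)
      _ = Real.exp (t^2 * b^2) ^ p := by simp [Finset.prod_const]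
      _ = Real.exp (p * (t^2 * b^2)) := by
          rw [← Real.exp_nat_mul]
  -- key exponent inequality
  have hexp : -t * α + t^2 * b^2 ≤ -(C * α^2) := by
    rcases le_or_gt α b with hcase | hcase
    · have hteq : t = α/(2*b^2) := by
        rw [htdef]
        apply min_eq_left
        rw [div_le_div_iff₀ (by positivity) (by positivity)]
        nlinarith
      have hCle : C ≤ 1/(4*b^2) := min_le_left _ _
      have heq : -(α/(2*b^2)) * α + (α/(2*b^2))^2 * b^2 = -(α^2/(4*b^2)) := by
        field_simp; ring
      rw [hteq, heq]
      have : C * α^2 ≤ (1/(4*b^2)) * α^2 := mul_le_mul_of_nonneg_right hCle (sq_nonneg α)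
      have h2 : (1/(4*b^2)) * α^2 = α^2/(4*b^2) := by ring
      linarith [this, h2 ▸ this]
    · have hteq : t = 1/(2*b) := by
        rw [htdef]
        apply min_eq_right
        rw [div_le_div_iff₀ (by positivity) (by positivity)]
        nlinarith
      have hCle : C ≤ b/2 := min_le_right _ _
      set u : ℝ := α/(2*b) with hu
      have h2b : (0:ℝ) < 2*b := by positivity
      have huu : α = u * (2*b) := by rw [hu]; field_simp
      have hupos : 0 < u := by rw [hu]; positivity
      have hu2 : 1/2 < u := by rw [hu, lt_div_iff₀ h2b]; linarith
      have h4b : 4*b^3*u < 1 := by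
        have h := hαp; rw [huu] at h; nlinarith
      have heq2 : -t * α + t^2*b^2 = -u + 1/4 := by
        rw [hteq, huu, hu]; field_simp; ring
      have hCa : C * α^2 = C * (u^2 * (4*b^2)) := by rw [huu]; ring
      rw [heq2, hCa]
      nlinarith [mul_lt_mul_of_pos_right h4b hupos,
        mul_le_mul_of_nonneg_right hCle
          (mul_nonneg (sq_nonneg u) (by positivity : (0:ℝ) ≤ 4*b^2))]
  -- Chernoff, upper tail
  set Sf : Ω → ℝ := fun ω => ∑ j, z j ω * z' j ω with hSf
  have hbound : Real.exp (-(t * ((p:ℝ) * α))) * Real.exp (p * (t^2*b^2))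
      ≤ Real.exp (-(C * p * α^2)) := by
    rw [← Real.exp_add, Real.exp_le_exp]
    have : -(t * ((p:ℝ)*α)) + p * (t^2*b^2) = (p:ℝ) * (-t * α + t^2*b^2) := by ring
    rw [this]
    calc (p:ℝ) * (-t * α + t^2*b^2) ≤ (p:ℝ) * (-(C * α^2)) :=
          mul_le_mul_of_nonneg_left hexp (Nat.cast_nonneg p)
      _ = -(C * p * α^2) := by ring
  have hup : (ℙ {ω | (p:ℝ) * α ≤ Sf ω}).toReal ≤ Real.exp (-(C * p * α^2)) := by
    have h1 := measure_ge_le_exp_mul_mgf (μ := (ℙ : Measure Ω)) (X := Sf)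
      ((p:ℝ) * α) ht.le (hsum t rfl).1
    refine h1.trans ?_
    calc Real.exp (-t * ((p:ℝ)*α)) * mgf Sf ℙ t
        ≤ Real.exp (-t * ((p:ℝ)*α)) * Real.exp (p * (t^2*b^2)) :=
          mul_le_mul_of_nonneg_left (hsum t rfl).2 (Real.exp_pos _).le
      _ ≤ Real.exp (-(C * p * α^2)) := by rw [neg_mul]; exact hbound
  have hlo : (ℙ {ω | Sf ω ≤ -((p:ℝ) * α)}).toReal ≤ Real.exp (-(C * p * α^2)) := by
    have h1 := measure_le_le_exp_mul_mgf (μ := (ℙ : Measure Ω)) (X := Sf)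
      (-((p:ℝ) * α)) (t := -t) (neg_nonpos.mpr ht.le) (hsum (-t) (by ring)).1
    refine h1.trans ?_
    have : -(-t) * (-((p:ℝ)*α)) = -(t * ((p:ℝ)*α)) := by ring
    rw [this]
    calc Real.exp (-(t * ((p:ℝ)*α))) * mgf Sf ℙ (-t)
        ≤ Real.exp (-(t * ((p:ℝ)*α))) * Real.exp (p * (t^2*b^2)) :=
          mul_le_mul_of_nonneg_left (hsum (-t) (by ring)).2 (Real.exp_pos _).le
      _ ≤ Real.exp (-(C * p * α^2)) := hbound
  -- combine
  have hsub : {ω | α < |(1 / (p : ℝ)) * ∑ j, z j ω * z' j ω|}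
      ⊆ {ω | (p:ℝ) * α ≤ Sf ω} ∪ {ω | Sf ω ≤ -((p:ℝ) * α)} := by
    intro ω hω
    simp only [Set.mem_setOf_eq] at hω
    have hppos : (0:ℝ) < p := by exact_mod_cast hp
    have habs : (p:ℝ) * α < |Sf ω| := by
      rw [abs_mul, abs_of_pos (by positivity : (0:ℝ) < 1/(p:ℝ))] at hω
      rw [← lt_div_iff₀' hppos]
      calc α < 1/(p:ℝ) * |Sf ω| := hω
        _ = |Sf ω| / (p:ℝ) := by ring
    rcases lt_abs.mp habs with h | h
    · exact Or.inl (Set.mem_setOf_eq ▸ h.le)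
    · exact Or.inr (by simp only [Set.mem_setOf_eq]; linarith)
  calc ℙ {ω | α < |(1 / (p : ℝ)) * ∑ j, z j ω * z' j ω|}
      ≤ ℙ ({ω | (p:ℝ) * α ≤ Sf ω} ∪ {ω | Sf ω ≤ -((p:ℝ) * α)}) := measure_mono hsub
    _ ≤ ℙ {ω | (p:ℝ) * α ≤ Sf ω} + ℙ {ω | Sf ω ≤ -((p:ℝ) * α)} := measure_union_le _ _
    _ ≤ ENNReal.ofReal (Real.exp (-(C * p * α^2))) + ENNReal.ofReal (Real.exp (-(C * p * α^2))) := by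
        gcongr
        · rw [← ENNReal.ofReal_toReal (measure_ne_top ℙ _)]
          exact ENNReal.ofReal_le_ofReal hup
        · rw [← ENNReal.ofReal_toReal (measure_ne_top ℙ _)]
          exact ENNReal.ofReal_le_ofReal hlo
    _ ≤ ENNReal.ofReal (4 * Real.exp (-(C * p * α ^ 2))) := by
        rw [← ENNReal.ofReal_add (Real.exp_pos _).le (Real.exp_pos _).le]
        apply ENNReal.ofReal_le_ofReal
        have := (Real.exp_pos (-(C * p * α^2))).le
        nlinarith [Real.exp_pos (-(C * p * α^2))]
end

section
/- Let d < p and H be positive integers, let A be a d × H real matrix, B a (p − d) × H real matrix, and let C be the p × H matrix obtained by stacking A on top of B. Let λ > 0, c > 0, μ ∈ ℝ, and K ≥ 0 with ‖B^τ B − μ I_H‖_F ≤ K. Let ξ̂_i and ξ̂_j be two orthogonal unit eigenvectors of C C^τ with associated eigenvalues λ̂_i > 0 and λ̂_j > 0 respectively, and let ξ̃_i, ξ̃_j ∈ ℝ^d denote the vectors of their first d coordinates. If ‖ξ̃_i‖_2 ≥ c √(λ / λ̂_i) and ‖ξ̃_j‖_2 ≥ c √(λ / λ̂_j), then the cosine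 of the angle between ξ̃_i and ξ̃_j satisfies |⟨ξ̃_i, ξ̃_j⟩| / ( ‖ξ̃_i‖_2 ‖ξ̃_j‖_2 ) ≤ K / (c^2 λ). -/
open Matrix

/-- The Euclidean norm of a real vector. -/
noncomputable def vecNorm {ι : Type*} [Fintype ι] (v : ι → ℝ) : ℝ :=
  Real.sqrt (∑ i, v i ^ 2)

/-- The Frobenius norm of a real matrix. -/
noncomputable def frobNorm {ι κ : Type*} [Fintype ι] [Fintype κ] (M : Matrix ι κ ℝ) : ℝ :=
  Real.sqrt (∑ i, ∑ j, M i j ^ 2)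

lemma dot_mulVec_self {α β : Type*} [Fintype α] [Fintype β] (N : Matrix α β ℝ) (u v : β → ℝ) :
    dotProduct (N.mulVec u) (N.mulVec v) = dotProduct u ((Nᵀ * N).mulVec v) := by
  rw [dotProduct_mulVec (N.mulVec u), ← Matrix.vecMul_transpose, Matrix.vecMul_vecMul,
    dotProduct_mulVec u]

/-- Cauchy–Schwarz for the bilinear form of a matrix, with Frobenius norm. -/
lemma cs_bilin {n m : Type*} [Fintype n] [Fintype m] (M : Matrix n m ℝ) (x : n → ℝ) (y : m → ℝ) :
    |dotProduct x (M.mulVec y)|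
      ≤ frobNorm M * (Real.sqrt (∑ i, x i ^ 2) * Real.sqrt (∑ j, y j ^ 2)) := by
  have h1 : dotProduct x (M.mulVec y)
      = ∑ q : n × m, M q.1 q.2 * (x q.1 * y q.2) := by
    rw [Fintype.sum_prod_type]
    simp only [dotProduct, Matrix.mulVec, Finset.mul_sum]
    exact Finset.sum_congr rfl fun i _ => Finset.sum_congr rfl fun j _ => by ring
  have h2 := Finset.sum_mul_sq_le_sq_mul_sq Finset.univ
      (fun q : n × m => M q.1 q.2) (fun q : n × m => x q.1 * y q.2)
  have h3 : (∑ q : n × m, (x q.1 * y q.2) ^ 2) = (∑ i, x i ^ 2) * ∑ j, y j ^ 2 := by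
    rw [Fintype.sum_prod_type, Finset.sum_mul_sum]
    exact Finset.sum_congr rfl fun i _ => Finset.sum_congr rfl fun j _ => by ring
  calc |dotProduct x (M.mulVec y)|
      = Real.sqrt ((dotProduct x (M.mulVec y)) ^ 2) := (Real.sqrt_sq_eq_abs _).symm
    _ ≤ Real.sqrt ((∑ q : n × m, (M q.1 q.2) ^ 2) * ∑ q : n × m, (x q.1 * y q.2) ^ 2) := by
        apply Real.sqrt_le_sqrt; rw [h1]; exact h2
    _ = frobNorm M * (Real.sqrt (∑ i, x i ^ 2) * Real.sqrt (∑ j, y j ^ 2)) := by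
        rw [h3, Real.sqrt_mul (by positivity), Real.sqrt_mul (by positivity), frobNorm]
        congr 2
        exact Fintype.sum_prod_type _

/-- Near-orthogonality of the first-`d`-coordinate projections of
eigenvectors of `C Cᵀ`, where `C` stacks `A` on top of `B`. -/
theorem stmt_6 (p d H : ℕ) (hdp : d < p)
    (A : Matrix (Fin d) (Fin H) ℝ) (B : Matrix (Fin (p - d)) (Fin H) ℝ)
    (lam c μ K : ℝ) (hlam : 0 < lam) (hc : 0 < c) (hK : 0 ≤ K)
    (hB : frobNorm (Bᵀ * B - μ • (1 : Matrix (Fin H) (Fin H) ℝ)) ≤ K)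
    (lami lamj : ℝ) (hlami : 0 < lami) (hlamj : 0 < lamj)
    (ξi ξj : Fin d ⊕ Fin (p - d) → ℝ)
    (heigi : (Matrix.fromRows A B * (Matrix.fromRows A B)ᵀ).mulVec ξi = lami • ξi)
    (heigj : (Matrix.fromRows A B * (Matrix.fromRows A B)ᵀ).mulVec ξj = lamj • ξj)
    (huniti : dotProduct ξi ξi = 1)
    (hunitj : dotProduct ξj ξj = 1)
    (horth : dotProduct ξi ξj = 0)
    (hproji : c * Real.sqrt (lam / lami) ≤ vecNorm (fun a : Fin d => ξi (Sum.inl a)))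
    (hprojj : c * Real.sqrt (lam / lamj) ≤ vecNorm (fun a : Fin d => ξj (Sum.inl a))) :
    |∑ a : Fin d, ξi (Sum.inl a) * ξj (Sum.inl a)|
        / (vecNorm (fun a : Fin d => ξi (Sum.inl a))
            * vecNorm (fun a : Fin d => ξj (Sum.inl a)))
      ≤ K / (c ^ 2 * lam) := by
  set C := Matrix.fromRows A B with hC
  set ηi := Cᵀ.mulVec ξi with hηi
  set ηj := Cᵀ.mulVec ξj with hηj
  set M := Bᵀ * B - μ • (1 : Matrix (Fin H) (Fin H) ℝ) with hM
  set ui : Fin d → ℝ := fun a => ξi (Sum.inl a) with hui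
  set uj : Fin d → ℝ := fun a => ξj (Sum.inl a) with huj
  have hCi : C.mulVec ηi = lami • ξi := by
    rw [hηi, Matrix.mulVec_mulVec, heigi]
  have hCj : C.mulVec ηj = lamj • ξj := by
    rw [hηj, Matrix.mulVec_mulVec, heigj]
  have key : ∀ (x y : Fin d ⊕ Fin (p - d) → ℝ) (l : ℝ),
      (C * Cᵀ).mulVec y = l • y →
      dotProduct (Cᵀ.mulVec x) (Cᵀ.mulVec y) = l * dotProduct x y := by
    intro x y l h
    rw [dot_mulVec_self, Matrix.transpose_transpose, h, dotProduct_smul, smul_eq_mul]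
  have hii : dotProduct ηi ηi = lami := by
    rw [hηi, key ξi ξi lami heigi, huniti, mul_one]
  have hjj : dotProduct ηj ηj = lamj := by
    rw [hηj, key ξj ξj lamj heigj, hunitj, mul_one]
  have hij : dotProduct ηi ηj = 0 := by
    rw [hηi, hηj, key ξi ξj lamj heigj, horth, mul_zero]
  have hAi : A.mulVec ηi = lami • ui := by
    funext a
    have := congrFun hCi (Sum.inl a)
    rwa [hC, Matrix.fromRows_mulVec] at this
  have hAj : A.mulVec ηj = lamj • uj := by
    funext a
    have := congrFun hCj (Sum.inl a)
    rwa [hC, Matrix.fromRows_mulVec] at this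
  have hCtC : Cᵀ * C = Aᵀ * A + Bᵀ * B := by
    rw [hC, Matrix.transpose_fromRows, Matrix.fromCols_mul_fromRows]
  have h0 : dotProduct ηi ((Cᵀ * C).mulVec ηj) = 0 := by
    rw [← Matrix.mulVec_mulVec, hCj, Matrix.mulVec_smul, dotProduct_smul]
    rw [show Cᵀ.mulVec ξj = ηj from rfl, hij, smul_zero]
  set S := ∑ a : Fin d, ξi (Sum.inl a) * ξj (Sum.inl a) with hSdef
  have hSdot : dotProduct ui uj = S := rfl
  have hS : lami * lamj * S = - dotProduct ηi (M.mulVec ηj) := by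
    have h1 : dotProduct (A.mulVec ηi) (A.mulVec ηj) = lami * lamj * S := by
      rw [hAi, hAj, smul_dotProduct, dotProduct_smul, hSdot, smul_eq_mul,
        smul_eq_mul]
      ring
    have hAtA : Aᵀ * A = Cᵀ * C - Bᵀ * B := by rw [hCtC, add_sub_cancel_right]
    have hBtB : Bᵀ * B = M + μ • (1 : Matrix (Fin H) (Fin H) ℝ) := by
      rw [hM, sub_add_cancel]
    have h2 : dotProduct (A.mulVec ηi) (A.mulVec ηj)
        = - dotProduct ηi (M.mulVec ηj) := by
      rw [dot_mulVec_self, hAtA, Matrix.sub_mulVec, dotProduct_sub, h0, zero_sub,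
        hBtB, Matrix.add_mulVec, dotProduct_add, Matrix.smul_mulVec,
        Matrix.one_mulVec, dotProduct_smul, hij, smul_zero, add_zero]
    rw [← h1, h2]
  -- norms of η
  have hsumi : (∑ i, ηi i ^ 2) = lami := by
    rw [← hii]; simp [dotProduct, sq]
  have hsumj : (∑ i, ηj i ^ 2) = lamj := by
    rw [← hjj]; simp [dotProduct, sq]
  set si := Real.sqrt lami with hsi
  set sj := Real.sqrt lamj with hsj
  have hsi0 : 0 < si := Real.sqrt_pos.mpr hlami
  have hsj0 : 0 < sj := Real.sqrt_pos.mpr hlamj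
  have hsi2 : si * si = lami := Real.mul_self_sqrt hlami.le
  have hsj2 : sj * sj = lamj := Real.mul_self_sqrt hlamj.le
  -- Cauchy–Schwarz bound on the bilinear form
  have hcs : |dotProduct ηi (M.mulVec ηj)| ≤ K * (si * sj) := by
    have := cs_bilin M ηi ηj
    rw [hsumi, hsumj] at this
    refine this.trans ?_
    have := mul_le_mul_of_nonneg_right hB (by positivity : (0:ℝ) ≤ si * sj)
    linarith
  -- numerator bound
  have hnum : |S| ≤ K / (si * sj) := by
    have habs : lami * lamj * |S| = |dotProduct ηi (M.mulVec ηj)| := by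
      have h := congrArg abs hS
      rwa [abs_neg, abs_mul, abs_of_pos (mul_pos hlami hlamj)] at h
    rw [le_div_iff₀ (by positivity : (0:ℝ) < si * sj)]
    have hkey : |S| * (si * sj) * (si * sj) ≤ K * (si * sj) := by
      calc |S| * (si * sj) * (si * sj) = lami * lamj * |S| := by
            rw [← hsi2, ← hsj2]; ring
        _ = |dotProduct ηi (M.mulVec ηj)| := habs
        _ ≤ K * (si * sj) := hcs
    exact le_of_mul_le_mul_right hkey (by positivity)
  -- denominator bound
  have hdlow : c ^ 2 * lam / (si * sj)
      ≤ vecNorm ui * vecNorm uj := by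
    have e1 : c * Real.sqrt (lam / lami) * (c * Real.sqrt (lam / lamj))
        = c ^ 2 * lam / (si * sj) := by
      rw [Real.sqrt_div hlam.le, Real.sqrt_div hlam.le, ← hsi, ← hsj]
      field_simp
      exact Real.sq_sqrt hlam.le
    have h2 := mul_le_mul hproji hprojj (by positivity)
      (le_trans (by positivity) hproji)
    rw [e1] at h2
    exact h2
  have hd0 : 0 < c ^ 2 * lam / (si * sj) := by positivity
  have hne1 : si * sj ≠ 0 := by positivity
  have hne2 : c ^ 2 * lam ≠ 0 := by positivity
  calc |S| / (vecNorm ui * vecNorm uj)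
      ≤ (K / (si * sj)) / (c ^ 2 * lam / (si * sj)) :=
        div_le_div₀ (by positivity) hnum hd0 hdlow
    _ = K / (c ^ 2 * lam) := by
        field_simp
end

section
/- Let 0 < C_min ≤ C_max. There exists a constant ζ with 0 < ζ < 1, depending only on C_min and C_max, such that the following holds: for every positive integers d and p with 2 ≤ d ≤ p, every real symmetric positive definite p × p matrix A with C_min ≤ λ_min(A) ≤ λ_max(A) ≤ C_max, and every p × d real matrix B with orthonormal columns, one has | B_{*,i}^τ A^τ A B_{*,j} | ≤ ζ · ‖A B_{*,i}‖_2 ‖A B_{*,j}‖_2 for all i ≠ j, where B_{*,i} denotes the i-th column of B. -/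
open Matrix

lemma unitary_dot {p : ℕ} (U : Matrix (Fin p) (Fin p) ℝ) (hU : Uᵀ * U = 1)
    (z z' : Fin p → ℝ) : (U *ᵥ z) ⬝ᵥ (U *ᵥ z') = z ⬝ᵥ z' := by
  rw [dotProduct_mulVec, ← vecMul_transpose, vecMul_vecMul, hU, vecMul_one]

lemma quad_bound {p : ℕ} {Cmin Cmax : ℝ} (hCmin : 0 ≤ Cmin)
    (A : Matrix (Fin p) (Fin p) ℝ) (hA : A.IsHermitian)
    (hb : ∀ i, Cmin ≤ hA.eigenvalues i ∧ hA.eigenvalues i ≤ Cmax) (w : Fin p → ℝ) :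
    Cmin^2 * (w ⬝ᵥ w) ≤ (A *ᵥ w) ⬝ᵥ (A *ᵥ w) ∧
      (A *ᵥ w) ⬝ᵥ (A *ᵥ w) ≤ Cmax^2 * (w ⬝ᵥ w) := by
  set U : Matrix (Fin p) (Fin p) ℝ := (hA.eigenvectorUnitary : Matrix (Fin p) (Fin p) ℝ) with hUdef
  have hstar : star U = Uᵀ := rfl
  have hU1 : Uᵀ * U = 1 := by
    rw [← hstar]; exact Unitary.coe_star_mul_self hA.eigenvectorUnitary
  have hU2 : U * Uᵀ = 1 := by
    rw [← hstar]; exact Unitary.coe_mul_star_self hA.eigenvectorUnitary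
  set μ := hA.eigenvalues with hμ
  have hspec : A = U * diagonal μ * Uᵀ := by
    have := hA.spectral_theorem
    rw [← hstar]; exact this
  set c : Fin p → ℝ := Uᵀ *ᵥ w with hc
  have hwc : w = U *ᵥ c := by
    rw [hc, mulVec_mulVec, hU2, one_mulVec]
  have hww : w ⬝ᵥ w = ∑ k, c k ^ 2 := by
    rw [hwc, unitary_dot U hU1]
    simp [dotProduct, sq]
  have hdiag : diagonal μ *ᵥ c = fun k => μ k * c k := by
    funext k; simp [mulVec_diagonal]
  have hAw : A *ᵥ w = U *ᵥ (fun k => μ k * c k) := by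
    rw [hspec, ← hdiag, hc, mulVec_mulVec, mulVec_mulVec]
  have hAww : (A *ᵥ w) ⬝ᵥ (A *ᵥ w) = ∑ k, μ k ^ 2 * c k ^ 2 := by
    rw [hAw, unitary_dot U hU1]
    simp [dotProduct]; ring_nf
  constructor
  · rw [hww, hAww, Finset.mul_sum]
    apply Finset.sum_le_sum
    intro k _
    have h := hb k
    have h1 : Cmin^2 ≤ μ k^2 := by nlinarith [h.1, hCmin]
    exact mul_le_mul_of_nonneg_right h1 (sq_nonneg _)
  · rw [hww, hAww, Finset.mul_sum]
    apply Finset.sum_le_sum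
    intro k _
    have h := hb k
    have h1 : μ k^2 ≤ Cmax^2 := by nlinarith [h.1, h.2, hCmin]
    exact mul_le_mul_of_nonneg_right h1 (sq_nonneg _)

set_option maxHeartbeats 1000000

/-- Uniform angle bound: for a well-conditioned symmetric positive
definite matrix `A` and any matrix `B` with orthonormal columns, the images under `A` of
distinct columns of `B` make an angle bounded away from zero. -/
theorem stmt_7 (Cmin Cmax : ℝ) (hCmin : 0 < Cmin) (hC : Cmin ≤ Cmax) :
    ∃ ζ : ℝ, 0 < ζ ∧ ζ < 1 ∧
      ∀ (d p : ℕ), 2 ≤ d → d ≤ p →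
      ∀ (A : Matrix (Fin p) (Fin p) ℝ) (hA : A.IsHermitian), A.PosDef →
      (∀ i, Cmin ≤ hA.eigenvalues i ∧ hA.eigenvalues i ≤ Cmax) →
      ∀ B : Matrix (Fin p) (Fin d) ℝ, Bᵀ * B = 1 →
      ∀ i j : Fin d, i ≠ j →
        |dotProduct (fun k => B k i) ((Aᵀ * A).mulVec fun k => B k j)|
          ≤ ζ * vecNorm (A.mulVec fun k => B k i) * vecNorm (A.mulVec fun k => B k j) := by
  have hCmax : 0 < Cmax := lt_of_lt_of_le hCmin hC
  refine ⟨(2*Cmax^2 - Cmin^2)/(2*Cmax^2), div_pos (by nlinarith) (by positivity), ?_, ?_⟩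
  · rw [div_lt_one (by positivity)]; nlinarith
  intro d p hd hdp A hA hPD hb B hB i j hij
  set u : Fin p → ℝ := fun k => B k i with hu
  set v : Fin p → ℝ := fun k => B k j with hv
  -- column orthonormality
  have hcol : ∀ a b : Fin d, (fun k => B k a) ⬝ᵥ (fun k => B k b) = if a = b then 1 else 0 := by
    intro a b
    have := congrFun (congrFun hB a) b
    simpa [Matrix.mul_apply, dotProduct, Matrix.one_apply] using this
  have huu : u ⬝ᵥ u = 1 := by simpa using hcol i i
  have hvv : v ⬝ᵥ v = 1 := by simpa using hcol j j
  have huv : u ⬝ᵥ v = 0 := by simpa [hij] using hcol i j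
  -- rewrite LHS
  have hAsym : Aᵀ = A := hA.eq
  have hlhs : (fun k => B k i) ⬝ᵥ ((Aᵀ * A) *ᵥ fun k => B k j) = (A *ᵥ u) ⬝ᵥ (A *ᵥ v) := by
    rw [← mulVec_mulVec, dotProduct_mulVec, vecMul_transpose]
  rw [hlhs]
  set x : Fin p → ℝ := A *ᵥ u with hx
  set y : Fin p → ℝ := A *ᵥ v with hy
  set s : ℝ := vecNorm x with hs
  set t : ℝ := vecNorm y with ht
  have hxx : x ⬝ᵥ x = s^2 := by
    rw [hs, vecNorm, Real.sq_sqrt (by positivity : (0:ℝ) ≤ ∑ k, x k ^2)]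
    simp [dotProduct, sq]
  have hyy : y ⬝ᵥ y = t^2 := by
    rw [ht, vecNorm, Real.sq_sqrt (by positivity : (0:ℝ) ≤ ∑ k, y k ^2)]
    simp [dotProduct, sq]
  have hbu := quad_bound hCmin.le A hA hb u
  have hbv := quad_bound hCmin.le A hA hb v
  rw [huu] at hbu; rw [hvv] at hbv
  rw [hxx] at hbu; rw [hyy] at hbv
  simp only [mul_one] at hbu hbv
  have hs0 : 0 < s := by
    have : (0:ℝ) < s^2 := lt_of_lt_of_le (by positivity) hbu.1
    have hsnn : 0 ≤ s := Real.sqrt_nonneg _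
    nlinarith
  have ht0 : 0 < t := by
    have : (0:ℝ) < t^2 := lt_of_lt_of_le (by positivity) hbv.1
    have htnn : 0 ≤ t := Real.sqrt_nonneg _
    nlinarith
  set P : ℝ := x ⬝ᵥ y with hP
  -- key inequalities from applying lower bound to t•u ∓ s•v
  have hminus := (quad_bound hCmin.le A hA hb (t • u - s • v)).1
  have hplus := (quad_bound hCmin.le A hA hb (t • u + s • v)).1
  have hAm : A *ᵥ (t • u - s • v) = t • x - s • y := by
    rw [mulVec_sub, mulVec_smul, mulVec_smul]
  have hAp : A *ᵥ (t • u + s • v) = t • x + s • y := by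
    rw [mulVec_add, mulVec_smul, mulVec_smul]
  rw [hAm] at hminus; rw [hAp] at hplus
  have hvu : v ⬝ᵥ u = 0 := by rw [dotProduct_comm]; exact huv
  have hyx : y ⬝ᵥ x = P := by rw [dotProduct_comm]
  have em : (t • u - s • v) ⬝ᵥ (t • u - s • v) = t^2 + s^2 := by
    simp [dotProduct_sub, sub_dotProduct, dotProduct_smul, smul_dotProduct, huu, hvv, huv, hvu]
    ring
  have ep : (t • u + s • v) ⬝ᵥ (t • u + s • v) = t^2 + s^2 := by
    simp [dotProduct_add, add_dotProduct, dotProduct_smul, smul_dotProduct, huu, hvv, huv, hvu]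
    ring
  have fm : (t • x - s • y) ⬝ᵥ (t • x - s • y) = t^2*s^2 + s^2*t^2 - 2*s*t*P := by
    simp [dotProduct_sub, sub_dotProduct, dotProduct_smul, smul_dotProduct, hxx, hyy, hyx]
    ring
  have fp : (t • x + s • y) ⬝ᵥ (t • x + s • y) = t^2*s^2 + s^2*t^2 + 2*s*t*P := by
    simp [dotProduct_add, add_dotProduct, dotProduct_smul, smul_dotProduct, hxx, hyy, hyx]
    ring
  rw [em, fm] at hminus
  rw [ep, fp] at hplus
  -- now pure algebra
  rw [abs_le]
  have hst : 0 < s * t := mul_pos hs0 ht0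
  have key1 : P * (2*Cmax^2) * (s*t) ≤ ((2*Cmax^2 - Cmin^2)/(2*Cmax^2) * s * t) * (2*Cmax^2) * (s*t) := by
    have expand : ((2*Cmax^2 - Cmin^2)/(2*Cmax^2) * s * t) * (2*Cmax^2) * (s*t)
        = (2*Cmax^2 - Cmin^2) * (s*t) * (s*t) := by
      field_simp
    rw [expand]
    nlinarith [mul_le_mul_of_nonneg_right hminus (sq_nonneg Cmax),
      mul_nonneg (mul_nonneg (sq_nonneg Cmin) (sub_nonneg.2 hbv.2)) (sq_nonneg s),
      sq_nonneg (Cmin*Cmax*t)]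
  have key2 : -(((2*Cmax^2 - Cmin^2)/(2*Cmax^2) * s * t) * (2*Cmax^2) * (s*t)) ≤ P * (2*Cmax^2) * (s*t) := by
    have expand : ((2*Cmax^2 - Cmin^2)/(2*Cmax^2) * s * t) * (2*Cmax^2) * (s*t)
        = (2*Cmax^2 - Cmin^2) * (s*t) * (s*t) := by
      field_simp
    rw [expand]
    nlinarith [mul_le_mul_of_nonneg_right hplus (sq_nonneg Cmax),
      mul_nonneg (mul_nonneg (sq_nonneg Cmin) (sub_nonneg.2 hbv.2)) (sq_nonneg s),
      sq_nonneg (Cmin*Cmax*t)]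
  have hpos : (0:ℝ) < (2*Cmax^2) * (s*t) := by positivity
  constructor
  · have := le_of_mul_le_mul_right (by linarith [key2] : -((2*Cmax^2 - Cmin^2)/(2*Cmax^2) * s * t) * ((2*Cmax^2)*(s*t)) ≤ P * ((2*Cmax^2)*(s*t))) hpos
    linarith
  · have := le_of_mul_le_mul_right (by linarith [key1] : P * ((2*Cmax^2)*(s*t)) ≤ ((2*Cmax^2 - Cmin^2)/(2*Cmax^2) * s * t) * ((2*Cmax^2)*(s*t))) hpos
    linarith
end

section
/- Let u and v be nonzero vectors in ℝ^p, and let P_u = u u^τ / ‖u‖_2^2 and P_v = v v^τ / ‖v‖_2^2 be the orthogonal projection matrices onto the lines spanned by u and v. Then ‖P_u − P_v‖_F ≤ 4 ‖u − v‖_2 / ‖v‖_2. -/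
open Matrix

/-- The orthogonal projection matrix onto the line spanned by a vector `u`. -/
noncomputable def lineProj {p : ℕ} (u : Fin p → ℝ) : Matrix (Fin p) (Fin p) ℝ :=
  (∑ k, u k ^ 2)⁻¹ • Matrix.vecMulVec u u

/-- The Frobenius distance between the rank-one projections onto the
lines spanned by `u` and `v` is at most `4 ‖u − v‖₂ / ‖v‖₂`. -/
theorem stmt_11 (p : ℕ) (u v : Fin p → ℝ) (hu : u ≠ 0) (hv : v ≠ 0) :
    frobNorm (lineProj u - lineProj v) ≤ 4 * vecNorm (u - v) / vecNorm v := by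
  set a : ℝ := ∑ k, u k ^ 2 with ha_def
  set b : ℝ := ∑ k, v k ^ 2 with hb_def
  set s : ℝ := ∑ k, u k * v k with hs_def
  set D : ℝ := ∑ k, (u k - v k) ^ 2 with hD_def
  have ha : 0 < a := by
    obtain ⟨k, hk⟩ := Function.ne_iff.mp hu
    simp only [Pi.zero_apply] at hk
    exact Finset.sum_pos' (fun i _ => sq_nonneg _)
      ⟨k, Finset.mem_univ k, by positivity⟩
  have hb : 0 < b := by
    obtain ⟨k, hk⟩ := Function.ne_iff.mp hv
    simp only [Pi.zero_apply] at hk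
    exact Finset.sum_pos' (fun i _ => sq_nonneg _)
      ⟨k, Finset.mem_univ k, by positivity⟩
  have hD0 : 0 ≤ D := Finset.sum_nonneg fun i _ => sq_nonneg _
  have hcs : s ^ 2 ≤ a * b := Finset.sum_mul_sq_le_sq_mul_sq _ _ _
  have hD : D = a - 2 * s + b := by
    simp only [hD_def, ha_def, hb_def, hs_def, Finset.mul_sum,
      ← Finset.sum_sub_distrib, ← Finset.sum_add_distrib]
    exact Finset.sum_congr rfl fun i _ => by ring
  -- Frobenius norm squared
  have hF : ∑ i, ∑ j, ((lineProj u - lineProj v) i j) ^ 2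
      = 2 - 2 * s ^ 2 / (a * b) := by
    have e1 : ∀ i j : Fin p, (lineProj u - lineProj v) i j
        = a⁻¹ * (u i * u j) - b⁻¹ * (v i * v j) := by
      intro i j
      simp [lineProj, Matrix.sub_apply, Matrix.smul_apply, Matrix.vecMulVec_apply,
        smul_eq_mul, ha_def, hb_def]
    have e2 : ∑ i, ∑ j, ((lineProj u - lineProj v) i j) ^ 2
        = a⁻¹ ^ 2 * (∑ i, ∑ j, u i ^ 2 * u j ^ 2)
          - 2 * (a⁻¹ * b⁻¹) * (∑ i, ∑ j, (u i * v i) * (u j * v j))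
          + b⁻¹ ^ 2 * (∑ i, ∑ j, v i ^ 2 * v j ^ 2) := by
      rw [Finset.mul_sum, Finset.mul_sum, Finset.mul_sum, ← Finset.sum_sub_distrib,
        ← Finset.sum_add_distrib]
      refine Finset.sum_congr rfl fun i _ => ?_
      rw [Finset.mul_sum, Finset.mul_sum, Finset.mul_sum, ← Finset.sum_sub_distrib,
        ← Finset.sum_add_distrib]
      refine Finset.sum_congr rfl fun j _ => ?_
      rw [e1]; ring
    have e3 : ∑ i, ∑ j, u i ^ 2 * u j ^ 2 = a * a :=
      (Finset.sum_mul_sum _ _ _ _).symm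
    have e4 : ∑ i, ∑ j, (u i * v i) * (u j * v j) = s * s :=
      (Finset.sum_mul_sum _ _ _ _).symm
    have e5 : ∑ i, ∑ j, v i ^ 2 * v j ^ 2 = b * b :=
      (Finset.sum_mul_sum _ _ _ _).symm
    rw [e2, e3, e4, e5]
    field_simp
    ring
  have key : 2 - 2 * s ^ 2 / (a * b) ≤ 16 * D / b := by
    have poly : 2 * (a * b) - 2 * s ^ 2 ≤ 16 * a * D := by
      nlinarith [sq_nonneg (a - s), hcs, hD]
    have eq1 : 2 - 2 * s ^ 2 / (a * b) = (2 * (a * b) - 2 * s ^ 2) / (a * b) := by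
      field_simp
    have eq2 : 16 * D / b = (16 * a * D) / (a * b) := by
      field_simp
    rw [eq1, eq2]
    gcongr
  -- wrap up with square roots
  have hfrob : frobNorm (lineProj u - lineProj v)
      = Real.sqrt (2 - 2 * s ^ 2 / (a * b)) := by rw [frobNorm, hF]
  have hrhs : 4 * vecNorm (u - v) / vecNorm v = Real.sqrt (16 * D / b) := by
    rw [vecNorm, vecNorm]
    have : ∑ i, (u - v) i ^ 2 = D := by
      refine Finset.sum_congr rfl fun i _ => ?_
      simp [Pi.sub_apply]
    rw [this, show (16 : ℝ) * D / b = (4 * Real.sqrt D / Real.sqrt b) ^ 2 by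
      rw [div_pow, mul_pow, Real.sq_sqrt hD0, Real.sq_sqrt hb.le]; norm_num,
      Real.sqrt_sq (by positivity)]
  rw [hfrob, hrhs]
  exact Real.sqrt_le_sqrt key
end

section
/- Let X be a p × n real matrix, δ ∈ ℝ^p, T ⊆ {1, …, p} with |T| ≤ s, and let μ ≥ 0 and κ > 0. Suppose: (i) ‖δ_{T^c}‖_1 ≤ 3 ‖δ_T‖_1; (ii) (1/n) ‖X^τ δ‖_2^2 ≥ κ^2 ‖δ‖_2^2; and (iii) ‖ (1/n) X X^τ δ ‖_∞ ≤ μ. Then ‖δ‖_2 ≤ 4 √s · μ / κ^2. -/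
open Matrix

/-- The entrywise supremum norm of a real vector. -/
noncomputable def vecSupNorm {ι : Type*} [Fintype ι] (v : ι → ℝ) : ℝ :=
  ⨆ i, |v i|

/-- Basic bound for a vector in the restricted-eigenvalue cone. -/
theorem stmt_12 (p n s : ℕ) (hn : 0 < n)
    (X : Matrix (Fin p) (Fin n) ℝ) (δ : Fin p → ℝ)
    (T : Finset (Fin p)) (hT : T.card ≤ s)
    (μ κ : ℝ) (hμ : 0 ≤ μ) (hκ : 0 < κ)
    (hcone : (∑ i ∈ Tᶜ, |δ i|) ≤ 3 * ∑ i ∈ T, |δ i|)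
    (hRE : κ ^ 2 * ∑ i, δ i ^ 2 ≤ (n : ℝ)⁻¹ * ∑ j, (Xᵀ.mulVec δ) j ^ 2)
    (hgrad : vecSupNorm ((n : ℝ)⁻¹ • (X * Xᵀ).mulVec δ) ≤ μ) :
    vecNorm δ ≤ 4 * Real.sqrt s * μ / κ ^ 2 := by
  set N := Real.sqrt (∑ i, δ i ^ 2) with hNdef
  have hNnn : 0 ≤ N := Real.sqrt_nonneg _
  have hsum_nn : 0 ≤ ∑ i, δ i ^ 2 := Finset.sum_nonneg fun i _ => sq_nonneg _
  have hN2 : N ^ 2 = ∑ i, δ i ^ 2 := Real.sq_sqrt hsum_nn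
  set w : Fin p → ℝ := (n : ℝ)⁻¹ • (X * Xᵀ).mulVec δ with hw
  have hwbound : ∀ i, |w i| ≤ μ := fun i =>
    (le_ciSup (Set.Finite.bddAbove (Set.finite_range fun i => |w i|)) i).trans hgrad
  -- key identity: (1/n) ‖Xᵀδ‖² = ∑ δ i * w i
  have hid : (n : ℝ)⁻¹ * ∑ j, (Xᵀ.mulVec δ) j ^ 2 = ∑ i, δ i * w i := by
    have h1 : δ ⬝ᵥ ((X * Xᵀ).mulVec δ) = ∑ j, (Xᵀ.mulVec δ) j ^ 2 := by
      rw [← Matrix.mulVec_mulVec, Matrix.dotProduct_mulVec, ← Matrix.mulVec_transpose]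
      simp [dotProduct, sq]
    calc (n : ℝ)⁻¹ * ∑ j, (Xᵀ.mulVec δ) j ^ 2
        = (n : ℝ)⁻¹ * (δ ⬝ᵥ ((X * Xᵀ).mulVec δ)) := by rw [h1]
      _ = ∑ i, δ i * w i := by
          simp only [hw, dotProduct, Pi.smul_apply, smul_eq_mul, Finset.mul_sum]
          exact Finset.sum_congr rfl fun i _ => by ring
  -- ℓ¹ bound
  have hl1 : ∑ i, |δ i| ≤ 4 * ∑ i ∈ T, |δ i| := by
    rw [← Finset.sum_add_sum_compl T]
    have : 0 ≤ ∑ i ∈ T, |δ i| := Finset.sum_nonneg fun i _ => abs_nonneg _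
    linarith
  -- Cauchy–Schwarz
  have hcs : ∑ i ∈ T, |δ i| ≤ Real.sqrt s * N := by
    have h1 : (∑ i ∈ T, |δ i|) ^ 2 ≤ T.card * ∑ i ∈ T, |δ i| ^ 2 :=
      sq_sum_le_card_mul_sum_sq
    have h2 : (∑ i ∈ T, |δ i| ^ 2) ≤ ∑ i, δ i ^ 2 := by
      refine (Finset.sum_le_sum_of_subset_of_nonneg (Finset.subset_univ T)
        fun i _ _ => sq_nonneg _).trans_eq ?_
      simp [sq_abs]
    have h3 : (∑ i ∈ T, |δ i|) ^ 2 ≤ (s : ℝ) * ∑ i, δ i ^ 2 := by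
      refine h1.trans ?_
      have : (T.card : ℝ) ≤ (s : ℝ) := by exact_mod_cast hT
      have hnn : 0 ≤ ∑ i ∈ T, |δ i| ^ 2 := Finset.sum_nonneg fun i _ => sq_nonneg _
      nlinarith
    have := Real.sqrt_le_sqrt h3
    rwa [Real.sqrt_sq (Finset.sum_nonneg fun i _ => abs_nonneg _),
      Real.sqrt_mul (by positivity)] at this
  -- main inequality
  have hmain : κ ^ 2 * N ^ 2 ≤ 4 * Real.sqrt s * μ * N := by
    rw [hN2]
    refine hRE.trans ?_
    rw [hid]
    calc ∑ i, δ i * w i ≤ ∑ i, |δ i| * μ := by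
          refine Finset.sum_le_sum fun i _ => ?_
          calc δ i * w i ≤ |δ i * w i| := le_abs_self _
            _ = |δ i| * |w i| := abs_mul _ _
            _ ≤ |δ i| * μ := mul_le_mul_of_nonneg_left (hwbound i) (abs_nonneg _)
      _ = (∑ i, |δ i|) * μ := by rw [← Finset.sum_mul]
      _ ≤ (4 * ∑ i ∈ T, |δ i|) * μ := mul_le_mul_of_nonneg_right hl1 hμ
      _ ≤ (4 * (Real.sqrt s * N)) * μ := by
          refine mul_le_mul_of_nonneg_right ?_ hμ
          linarith
      _ = 4 * Real.sqrt s * μ * N := by ring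
  show N ≤ 4 * Real.sqrt s * μ / κ ^ 2
  rcases eq_or_lt_of_le hNnn with h0 | h0
  · rw [← h0]; positivity
  · rw [le_div_iff₀ (by positivity)]
    nlinarith
end

section
/- Let X be a p × n real matrix, ỹ ∈ ℝ^n, μ > 0, and let β* ∈ ℝ^p be a vector whose support is contained in a set T ⊆ {1, …, p}. Define the Lasso objective L(β) = (1/(2n)) ‖ỹ − X^τ β‖_2^2 + μ ‖β‖_1, and let β̂ ∈ ℝ^p satisfy L(β̂) ≤ L(β*) (in particular this holds if β̂ is a global minimizer of L). If ‖ (1/n) X (ỹ − X^τ β*) ‖_∞ ≤ μ/2, then δ = β̂ − β* satisfies ‖δ_{T^c}‖_1 ≤ 3 ‖δ_T‖_1. -/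
open Matrix

/-- The Lasso objective `L(β) = (1/(2n)) ‖ỹ − Xᵀβ‖₂² + μ ‖β‖₁`. -/
noncomputable def lassoObj {p n : ℕ} (X : Matrix (Fin p) (Fin n) ℝ)
    (ytil : Fin n → ℝ) (μ : ℝ) (β : Fin p → ℝ) : ℝ :=
  1 / (2 * n) * ∑ j, (ytil j - (Xᵀ.mulVec β) j) ^ 2 + μ * ∑ i, |β i|

/-- Cone condition for the error of a Lasso (near-)minimizer. -/
theorem stmt_13 (p n : ℕ) (hn : 0 < n)
    (X : Matrix (Fin p) (Fin n) ℝ) (ytil : Fin n → ℝ) (μ : ℝ) (hμ : 0 < μ)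
    (βstar : Fin p → ℝ) (T : Finset (Fin p)) (hsupp : ∀ i ∉ T, βstar i = 0)
    (βhat : Fin p → ℝ)
    (hopt : lassoObj X ytil μ βhat ≤ lassoObj X ytil μ βstar)
    (hgrad : vecSupNorm ((n : ℝ)⁻¹ • X.mulVec (ytil - Xᵀ.mulVec βstar)) ≤ μ / 2) :
    (∑ i ∈ Tᶜ, |βhat i - βstar i|) ≤ 3 * ∑ i ∈ T, |βhat i - βstar i| := by
  classical
  set δ : Fin p → ℝ := fun i => βhat i - βstar i with hδ
  set a : Fin n → ℝ := fun j => ytil j - Xᵀ.mulVec βstar j with ha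
  set b : Fin n → ℝ := Xᵀ.mulVec δ with hbdef
  set g : Fin p → ℝ := X.mulVec a with hgdef
  have hnpos : (0 : ℝ) < n := by exact_mod_cast hn
  -- residual decomposition
  have hb : ∀ j, ytil j - Xᵀ.mulVec βhat j = a j - b j := by
    intro j
    have h1 : Xᵀ.mulVec δ = Xᵀ.mulVec βhat - Xᵀ.mulVec βstar := by
      rw [← Matrix.mulVec_sub]
      congr 1
    have h2 := congrFun h1 j
    simp only [Pi.sub_apply] at h2
    simp [hbdef, ha, h2]
  -- sums
  set S1 : ℝ := ∑ j, a j ^ 2 with hS1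
  set S2 : ℝ := ∑ j, a j * b j with hS2
  set S3 : ℝ := ∑ j, b j ^ 2 with hS3
  have hS3nonneg : 0 ≤ S3 := Finset.sum_nonneg fun j _ => sq_nonneg _
  have hsq : ∑ j, (ytil j - Xᵀ.mulVec βhat j) ^ 2 = S1 - 2 * S2 + S3 := by
    have h : ∀ j ∈ Finset.univ, (ytil j - Xᵀ.mulVec βhat j) ^ 2
        = a j ^ 2 - 2 * (a j * b j) + b j ^ 2 := fun j _ => by rw [hb j]; ring
    rw [Finset.sum_congr rfl h]
    simp [Finset.sum_add_distrib, Finset.sum_sub_distrib, Finset.mul_sum, hS1, hS2, hS3]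
  -- key inequality from optimality
  have hkey : 1 / (2 * n) * S3
      ≤ (n : ℝ)⁻¹ * S2 + μ * ((∑ i, |βstar i|) - ∑ i, |βhat i|) := by
    unfold lassoObj at hopt
    rw [hsq] at hopt
    have hsq' : ∑ j, (ytil j - Xᵀ.mulVec βstar j) ^ 2 = S1 := by
      simp [hS1, ha]
    rw [hsq'] at hopt
    have h2n : 1 / (2 * (n : ℝ)) * (2 * S2) = (n : ℝ)⁻¹ * S2 := by
      field_simp
    nlinarith [hopt]
  -- S2 as inner product with the gradient
  have hS2eq : S2 = ∑ i, δ i * g i := by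
    rw [hS2, hgdef]
    simp only [hbdef, Matrix.mulVec, dotProduct, Matrix.transpose_apply, Finset.mul_sum]
    rw [Finset.sum_comm]
    exact Finset.sum_congr rfl fun i _ => Finset.sum_congr rfl fun j _ => by ring
  -- pointwise gradient bound
  have hgpt : ∀ i, |(n : ℝ)⁻¹ * g i| ≤ μ / 2 := by
    intro i
    have hle : |((n : ℝ)⁻¹ • X.mulVec (ytil - Xᵀ.mulVec βstar)) i|
        ≤ vecSupNorm ((n : ℝ)⁻¹ • X.mulVec (ytil - Xᵀ.mulVec βstar)) := by
      unfold vecSupNorm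
      exact le_ciSup (f := fun k => |((n : ℝ)⁻¹ • X.mulVec (ytil - Xᵀ.mulVec βstar)) k|)
        (Set.Finite.bddAbove (Set.finite_range _)) i
    have hae : (ytil - Xᵀ.mulVec βstar) = a := by funext j; simp [ha]
    have heq : ((n : ℝ)⁻¹ • X.mulVec (ytil - Xᵀ.mulVec βstar)) i = (n : ℝ)⁻¹ * g i := by
      rw [hae]; simp [hgdef]
    rw [heq] at hle
    exact hle.trans hgrad
  -- bound on the inner product
  have hIP : (n : ℝ)⁻¹ * S2 ≤ (μ / 2) * ∑ i, |δ i| := by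
    rw [hS2eq, Finset.mul_sum, Finset.mul_sum]
    refine Finset.sum_le_sum fun i _ => ?_
    calc (n : ℝ)⁻¹ * (δ i * g i) ≤ |(n : ℝ)⁻¹ * (δ i * g i)| := le_abs_self _
      _ = |δ i| * |(n : ℝ)⁻¹ * g i| := by rw [← abs_mul]; congr 1; ring
      _ ≤ |δ i| * (μ / 2) := by
          exact mul_le_mul_of_nonneg_left (hgpt i) (abs_nonneg _)
      _ = μ / 2 * |δ i| := by ring
  -- ℓ¹ norm comparison
  set DT : ℝ := ∑ i ∈ T, |δ i| with hDT
  set DC : ℝ := ∑ i ∈ Tᶜ, |δ i| with hDC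
  have hsplit : ∀ v : Fin p → ℝ, ∑ i, |v i| = (∑ i ∈ T, |v i|) + ∑ i ∈ Tᶜ, |v i| := by
    intro v
    rw [← Finset.sum_add_sum_compl T]
  have hL1 : (∑ i, |βstar i|) - (∑ i, |βhat i|) ≤ DT - DC := by
    rw [hsplit βstar, hsplit βhat]
    have h1 : (∑ i ∈ T, |βstar i|) - ∑ i ∈ T, |βhat i| ≤ DT := by
      rw [← Finset.sum_sub_distrib, hDT]
      refine Finset.sum_le_sum fun i _ => ?_
      calc |βstar i| - |βhat i| ≤ |βstar i - βhat i| := abs_sub_abs_le_abs_sub _ _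
        _ = |δ i| := by rw [hδ]; simp [abs_sub_comm]
    have h2 : ∑ i ∈ Tᶜ, |βstar i| = 0 := by
      refine Finset.sum_eq_zero fun i hi => ?_
      rw [hsupp i (Finset.mem_compl.mp hi), abs_zero]
    have h3 : ∑ i ∈ Tᶜ, |βhat i| = DC := by
      rw [hDC]
      refine Finset.sum_congr rfl fun i hi => ?_
      rw [hδ]
      simp [hsupp i (Finset.mem_compl.mp hi)]
    rw [h2, h3]
    linarith
  have hDsum : ∑ i, |δ i| = DT + DC := hsplit δ
  have hfinal : 0 ≤ (μ / 2) * (DT + DC) + μ * (DT - DC) := by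
    have h0 : 0 ≤ 1 / (2 * (n : ℝ)) * S3 := by positivity
    have := hkey
    nlinarith [hIP, hL1, hDsum]
  -- conclude
  have : DC ≤ 3 * DT := by nlinarith [hfinal]
  simpa [hDC, hDT, hδ] using this
end

section
/- Let X be a p × n real matrix, ỹ ∈ ℝ^n, and μ > 0. If β̂ ∈ ℝ^p is a global minimizer of the Lasso objective L(β) = (1/(2n)) ‖ỹ − X^τ β‖_2^2 + μ ‖β‖_1, then ‖ (1/n) X (ỹ − X^τ β̂) ‖_∞ ≤ μ; equivalently, (1/n) ‖X X^τ β̂ − X ỹ‖_∞ ≤ μ. -/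
open Matrix

/-- KKT-type bound at a global minimizer of the Lasso objective. -/
theorem stmt_14 (p n : ℕ) (hn : 0 < n)
    (X : Matrix (Fin p) (Fin n) ℝ) (ytil : Fin n → ℝ) (μ : ℝ) (hμ : 0 < μ)
    (βhat : Fin p → ℝ)
    (hopt : ∀ β : Fin p → ℝ, lassoObj X ytil μ βhat ≤ lassoObj X ytil μ β) :
    vecSupNorm ((n : ℝ)⁻¹ • X.mulVec (ytil - Xᵀ.mulVec βhat)) ≤ μ ∧
    vecSupNorm ((n : ℝ)⁻¹ • ((X * Xᵀ).mulVec βhat - X.mulVec ytil)) ≤ μ := by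
  have hn' : (0:ℝ) < n := by exact_mod_cast hn
  set r : Fin n → ℝ := fun j => ytil j - Xᵀ.mulVec βhat j with hr
  have key : ∀ i, |∑ j, X i j * r j| ≤ n * μ := by
    intro i
    set a := ∑ j, X i j * r j with ha
    set b := ∑ j, (X i j)^2 with hb
    have hb0 : 0 ≤ b := Finset.sum_nonneg fun j _ => sq_nonneg _
    have main : ∀ t : ℝ, 2 * t * a ≤ t^2 * b + 2 * n * μ * |t| := by
      intro t
      have h := hopt (fun k => βhat k + if k = i then t else 0)
      have hmv : ∀ j, Xᵀ.mulVec (fun k => βhat k + if k = i then t else 0) j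
          = Xᵀ.mulVec βhat j + t * X i j := by
        intro j
        simp [Matrix.mulVec, dotProduct, mul_add, Finset.sum_add_distrib,
          mul_ite, Finset.sum_ite_eq', mul_comm]
      have hS : ∑ j, (ytil j - Xᵀ.mulVec (fun k => βhat k + if k = i then t else 0) j)^2
          = ∑ j, (r j)^2 - 2*t*a + t^2*b := by
        have h1 : ∀ j ∈ Finset.univ, (ytil j - Xᵀ.mulVec (fun k => βhat k + if k = i then t else 0) j)^2
            = (r j)^2 - 2*t*(X i j * r j) + t^2*(X i j)^2 := by
          intro j _
          rw [hmv j]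
          simp only [hr]
          ring
        rw [Finset.sum_congr rfl h1, Finset.sum_add_distrib, Finset.sum_sub_distrib,
          ← Finset.mul_sum, ← Finset.mul_sum, ha, hb]
      have hl1 : ∑ k, |βhat k + if k = i then t else 0| ≤ (∑ k, |βhat k|) + |t| := by
        have h2 : ∀ k ∈ Finset.univ, |βhat k + if k = i then t else 0|
            = |βhat k| + (if k = i then |βhat i + t| - |βhat i| else 0) := by
          intro k _
          by_cases hk : k = i
          · subst hk; simp
          · simp [hk]
        rw [Finset.sum_congr rfl h2, Finset.sum_add_distrib, Finset.sum_ite_eq' Finset.univ i]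
        simp only [Finset.mem_univ, if_true]
        have : |βhat i + t| ≤ |βhat i| + |t| := abs_add_le _ _
        linarith
      simp only [lassoObj] at h
      rw [hS] at h
      have h2n : (0:ℝ) < 2 * n := by linarith
      have hfrac : 1 / (2 * (n:ℝ)) * (2*t*a - t^2*b) * (2*n) = 2*t*a - t^2*b := by
        field_simp
      have hμl : μ * (∑ k, |βhat k + if k = i then t else 0|) ≤ μ * ((∑ k, |βhat k|) + |t|) :=
        mul_le_mul_of_nonneg_left hl1 (le_of_lt hμ)
      have hkey : 1 / (2 * (n:ℝ)) * (2*t*a - t^2*b) ≤ μ * |t| := by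
        have := h
        nlinarith [hμl, this]
      nlinarith [mul_le_mul_of_nonneg_right hkey (le_of_lt h2n), hfrac]
    have hmag : ∀ ε : ℝ, 0 < ε → |a| ≤ n*μ + ε*b/2 := by
      intro ε hε
      rcases abs_cases a with ⟨h1, _⟩ | ⟨h1, _⟩
      · have := main ε; rw [abs_of_pos hε] at this; nlinarith
      · have := main (-ε); rw [abs_neg, abs_of_pos hε] at this; nlinarith
    by_contra hcon
    push_neg at hcon
    have hc : 0 < |a| - n*μ := by linarith
    have hb1 : (0:ℝ) < b + 1 := by linarith
    have := hmag ((|a| - n*μ)/(b+1)) (div_pos hc hb1)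
    have hlt : (|a| - n*μ)/(b+1)*b/2 < |a| - n*μ := by
      rw [div_mul_eq_mul_div, div_div, div_lt_iff₀ (by nlinarith : (0:ℝ) < (b+1)*2)]
      nlinarith
    linarith
  have hent : ∀ i, |((n : ℝ)⁻¹ • X.mulVec (ytil - Xᵀ.mulVec βhat)) i| ≤ μ := by
    intro i
    have hmv : X.mulVec (ytil - Xᵀ.mulVec βhat) i = ∑ j, X i j * r j := by
      simp [Matrix.mulVec, dotProduct, hr]
    simp only [Pi.smul_apply, smul_eq_mul, hmv, abs_mul, abs_inv,
      abs_of_pos hn']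
    rw [inv_mul_le_iff₀ hn']
    exact key i
  constructor
  · exact Real.iSup_le hent (le_of_lt hμ)
  · apply Real.iSup_le _ (le_of_lt hμ)
    intro i
    have heq : ((X * Xᵀ).mulVec βhat - X.mulVec ytil) i
        = -(X.mulVec (ytil - Xᵀ.mulVec βhat) i) := by
      have h1 : (X * Xᵀ).mulVec βhat = X.mulVec (Xᵀ.mulVec βhat) :=
        (Matrix.mulVec_mulVec βhat X Xᵀ).symm
      rw [Pi.sub_apply, h1, Matrix.mulVec_sub]
      simp [Pi.sub_apply]
    rw [Pi.smul_apply, heq, smul_eq_mul, mul_neg, abs_neg]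
    exact hent i
end
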